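/- Let T be a bounded linear operator on a Banach space X which is J^mix-class. Then the set A_T^mix = {x ∈ X : J_T^mix(x) = X} is a closed linear subspace of X. -/
import Mathlib


open Filter Topology

/-- The extended mixing limit set `J_T^mix(x)`: all `y` for which there exists a
sequence `(x_n)` with `x_n → x` and `T^n x_n → y`. -/
noncomputable def Jmix {X : Type*} [SeminormedAddCommGroup X] [NormedSpace ℂ X]
    (T : X →L[ℂ] X) (x : X) : Set X :=
  {y | ∃ u : ℕ → X, Tendsto u atTop (𝓝 x) ∧ Tendsto (fun n => (T ^ n) (u n)) atTop (𝓝 y)}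

lemma jmix_add {X : Type*} [SeminormedAddCommGroup X] [NormedSpace ℂ X]
    (T : X →L[ℂ] X) {x x' y y' : X} (h : y ∈ Jmix T x) (h' : y' ∈ Jmix T x') :
    y + y' ∈ Jmix T (x + x') := by
  obtain ⟨u, hu1, hu2⟩ := h
  obtain ⟨v, hv1, hv2⟩ := h'
  exact ⟨fun n => u n + v n, hu1.add hv1, by simpa [map_add] using hu2.add hv2⟩

lemma jmix_smul {X : Type*} [SeminormedAddCommGroup X] [NormedSpace ℂ X]
    (T : X →L[ℂ] X) {x y : X} (c : ℂ) (h : y ∈ Jmix T x) :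
    c • y ∈ Jmix T (c • x) := by
  obtain ⟨u, hu1, hu2⟩ := h
  exact ⟨fun n => c • u n, hu1.const_smul c, by simpa [map_smul] using hu2.const_smul c⟩

lemma forall_of_jmix {X : Type*} [SeminormedAddCommGroup X] [NormedSpace ℂ X]
    (T : X →L[ℂ] X) {x y : X} (h : y ∈ Jmix T x) :
    ∀ ε > (0:ℝ), ∃ N : ℕ, ∀ n ≥ N, ∃ z, ‖z - x‖ < ε ∧ ‖(T ^ n) z - y‖ < ε := by
  obtain ⟨u, hu1, hu2⟩ := h
  intro ε hε
  obtain ⟨N1, hN1⟩ := Metric.tendsto_atTop.1 hu1 ε hε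
  obtain ⟨N2, hN2⟩ := Metric.tendsto_atTop.1 hu2 ε hε
  refine ⟨max N1 N2, fun n hn => ⟨u n, ?_, ?_⟩⟩
  · simpa [dist_eq_norm] using hN1 n (le_trans (le_max_left _ _) hn)
  · simpa [dist_eq_norm] using hN2 n (le_trans (le_max_right _ _) hn)

lemma jmix_of_forall {X : Type*} [SeminormedAddCommGroup X] [NormedSpace ℂ X]
    (T : X →L[ℂ] X) {x y : X}
    (h : ∀ ε > (0:ℝ), ∃ N : ℕ, ∀ n ≥ N, ∃ z, ‖z - x‖ < ε ∧ ‖(T ^ n) z - y‖ < ε) :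
    y ∈ Jmix T x := by
  have h' : ∀ k : ℕ, ∃ N : ℕ, ∀ n ≥ N, ∃ z,
      ‖z - x‖ < 1 / (k + 1) ∧ ‖(T ^ n) z - y‖ < 1 / (k + 1) := by
    intro k
    exact h (1 / (k + 1)) (by positivity)
  choose N hN using h'
  classical
  set K : ℕ → ℕ := fun n => Nat.findGreatest (fun k => N k ≤ n) n with hK
  set u : ℕ → X := fun n => if hn : N (K n) ≤ n then (hN (K n) n hn).choose else x with hu
  have key : ∀ ε > (0:ℝ), ∃ M : ℕ, ∀ n ≥ M,
      ‖u n - x‖ < ε ∧ ‖(T ^ n) (u n) - y‖ < ε := by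
    intro ε hε
    obtain ⟨k₁, hk₁⟩ := exists_nat_one_div_lt hε
    refine ⟨max (N k₁) k₁, fun n hn => ?_⟩
    have h1 : N k₁ ≤ n := le_trans (le_max_left _ _) hn
    have h2 : k₁ ≤ n := le_trans (le_max_right _ _) hn
    have hkK : k₁ ≤ K n := Nat.le_findGreatest h2 h1
    have hcond : N (K n) ≤ n := Nat.findGreatest_spec (P := fun k => N k ≤ n) h2 h1
    have hspec := (hN (K n) n hcond).choose_spec
    have hle : (1:ℝ) / (K n + 1) ≤ 1 / (k₁ + 1) := by
      apply one_div_le_one_div_of_le (by positivity)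
      have : (k₁:ℝ) ≤ K n := by exact_mod_cast hkK
      linarith
    have hun : u n = (hN (K n) n hcond).choose := by rw [hu]; exact dif_pos hcond
    rw [hun]
    exact ⟨by linarith [hspec.1], by linarith [hspec.2]⟩
  refine ⟨u, ?_, ?_⟩
  · rw [Metric.tendsto_atTop]
    intro ε hε
    obtain ⟨M, hM⟩ := key ε hε
    exact ⟨M, fun n hn => by rw [dist_eq_norm]; exact (hM n hn).1⟩
  · rw [Metric.tendsto_atTop]
    intro ε hε
    obtain ⟨M, hM⟩ := key ε hε
    exact ⟨M, fun n hn => by rw [dist_eq_norm]; exact (hM n hn).2⟩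

/-- If `T` is a `J^mix`-class operator, then `A_T^mix = {x : J_T^mix(x) = X}` is a
closed linear subspace of `X`. -/
theorem stmt19 {X : Type*} [NormedAddCommGroup X] [NormedSpace ℂ X] [CompleteSpace X]
    (T : X →L[ℂ] X) (hT : ∃ x : X, x ≠ 0 ∧ Jmix T x = Set.univ) :
    ∃ S : Submodule ℂ X, (S : Set X) = {x : X | Jmix T x = Set.univ} ∧
      IsClosed (S : Set X) := by
  classical
  obtain ⟨x₀, hx₀ne, hx₀⟩ := hT
  set A : Set X := {x : X | Jmix T x = Set.univ} with hA
  have huniv : ∀ {x : X}, x ∈ A → ∀ y, y ∈ Jmix T x := by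
    intro x hx y
    rw [Set.mem_setOf_eq] at hx
    rw [hx]; trivial
  have hx₀mem : x₀ ∈ A := hx₀
  have hadd : ∀ {x x' : X}, x ∈ A → x' ∈ A → x + x' ∈ A := by
    intro x x' hx hx'
    show Jmix T (x + x') = Set.univ
    ext y
    simp only [Set.mem_univ, iff_true]
    simpa using jmix_add T (huniv hx 0) (huniv hx' y)
  have hneg : ∀ {x : X}, x ∈ A → -x ∈ A := by
    intro x hx
    show Jmix T (-x) = Set.univ
    ext y
    simp only [Set.mem_univ, iff_true]
    simpa using jmix_smul T (-1) (huniv hx (-y))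
  have hzero : (0:X) ∈ A := by
    have := hadd hx₀mem (hneg hx₀mem)
    simpa using this
  have hsmul : ∀ (c : ℂ) {x : X}, x ∈ A → c • x ∈ A := by
    intro c x hx
    rcases eq_or_ne c 0 with rfl | hc
    · simpa using hzero
    · show Jmix T (c • x) = Set.univ
      ext y
      simp only [Set.mem_univ, iff_true]
      have := jmix_smul T c (huniv hx (c⁻¹ • y))
      rwa [smul_inv_smul₀ hc] at this
  have hclosed : IsClosed A := by
    apply isClosed_of_closure_subset
    intro x hx
    show Jmix T x = Set.univ
    ext y
    simp only [Set.mem_univ, iff_true]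
    apply jmix_of_forall
    intro ε hε
    obtain ⟨x', hx'A, hdist⟩ := Metric.mem_closure_iff.1 hx (ε/2) (by linarith)
    obtain ⟨N, hN⟩ := forall_of_jmix T (huniv hx'A y) (ε/2) (by linarith)
    refine ⟨N, fun n hn => ?_⟩
    obtain ⟨z, hz1, hz2⟩ := hN n hn
    refine ⟨z, ?_, by linarith⟩
    have htri : ‖z - x‖ ≤ ‖z - x'‖ + ‖x' - x‖ := by
      simpa using norm_add_le (z - x') (x' - x)
    have hxx : ‖x' - x‖ < ε/2 := by
      rw [← dist_eq_norm, dist_comm]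
      exact hdist
    linarith
  exact ⟨{ carrier := A, add_mem' := hadd, zero_mem' := hzero,
           smul_mem' := hsmul }, rfl, hclosed⟩
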